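/- arXiv:2509.13564 — 4 statements merged into one kernel-verified Lean document; each statement's English description precedes it below -/
import Mathlib

section
/- Let 0 < ν < 1, β = ν²/(1−ν²), γ = ν/(1−ν²), r_T, ρ_T, ρ_A > 0, R = r_T + ρ_T. Suppose τ ≥ 0 satisfies ν·τ ≤ ρ_T − ν·ρ_A/(1 − ν) (i.e., τ ≤ τ₁* := ρ_T/ν − ρ_A/(1−ν)). Then for every angle θ and every entry angle θ_A0, the Apollonius-circle center x_C = (R − ν·τ)·û(θ_A0) − β·ρ_A·û(θ) satisfies ‖x_C‖ ≥ r_T + γ·ρ_A. -/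
open Real

/-- Unit vector at angle `θ` in the Euclidean plane. -/
noncomputable def uhat (θ : ℝ) : EuclideanSpace ℝ (Fin 2) :=
  WithLp.toLp 2 ![Real.cos θ, Real.sin θ]

lemma norm_uhat (θ : ℝ) : ‖uhat θ‖ = 1 := by
  rw [show uhat θ = (EuclideanSpace.equiv (Fin 2) ℝ).symm ![Real.cos θ, Real.sin θ] from rfl,
    EuclideanSpace.norm_eq]
  simp [Fin.sum_univ_two]

/-- If engagement begins no later than the critical time `τ₁* = ρ_T/ν − ρ_A/(1−ν)`
(equivalently `ντ ≤ ρ_T − νρ_A/(1−ν)`), then for every engagement angle `θ` and every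
entry angle `θ_A0`, the Apollonius-circle center `x_C = (R − ντ)û(θ_A0) − βρ_A û(θ)`
satisfies `‖x_C‖ ≥ r_T + γρ_A`: guarding is guaranteed regardless of the angle. -/
theorem guarding_before_critical_time_tau1
    (ν r_T ρ_T ρ_A τ : ℝ) (hν0 : 0 < ν) (hν1 : ν < 1)
    (hrT : 0 < r_T) (hρT : 0 < ρ_T) (hρA : 0 < ρ_A)
    (R β γ : ℝ) (hR : R = r_T + ρ_T)
    (hβ : β = ν ^ 2 / (1 - ν ^ 2)) (hγ : γ = ν / (1 - ν ^ 2))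
    (hτ0 : 0 ≤ τ) (hτ : ν * τ ≤ ρ_T - ν * ρ_A / (1 - ν)) :
    ∀ θ θ_A0 : ℝ,
      ‖((R - ν * τ) • uhat θ_A0 - (β * ρ_A) • uhat θ : EuclideanSpace ℝ (Fin 2))‖ ≥
        r_T + γ * ρ_A := by
  intro θ θ_A0
  have h1 : (0:ℝ) < 1 - ν := by linarith
  have h2 : (0:ℝ) < 1 - ν ^ 2 := by nlinarith
  have hβ0 : 0 ≤ β := by rw [hβ]; positivity
  have key : R - ν * τ - β * ρ_A ≥ r_T + γ * ρ_A := by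
    have hτ' : ν * ρ_A ≤ (ρ_T - ν * τ) * (1 - ν) := by
      have : ν * ρ_A / (1 - ν) ≤ ρ_T - ν * τ := by linarith
      rw [div_le_iff₀ h1] at this; linarith
    have e : β * ρ_A + γ * ρ_A = ν * ρ_A / (1 - ν) := by
      rw [hβ, hγ]; field_simp; ring
    rw [ge_iff_le, hR]
    have e2 : ν * ρ_A / (1 - ν) ≤ ρ_T - ν * τ := by
      rw [div_le_iff₀ h1]; linarith
    linarith
  have hb : |β * ρ_A| = β * ρ_A := abs_of_nonneg (mul_nonneg hβ0 hρA.le)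
  calc ‖((R - ν * τ) • uhat θ_A0 - (β * ρ_A) • uhat θ : EuclideanSpace ℝ (Fin 2))‖
      ≥ ‖(R - ν * τ) • uhat θ_A0‖ - ‖(β * ρ_A) • uhat θ‖ := norm_sub_norm_le _ _
    _ ≥ r_T + γ * ρ_A := by
        rw [norm_smul, norm_smul, norm_uhat, norm_uhat, mul_one, mul_one,
          Real.norm_eq_abs, Real.norm_eq_abs, hb]
        linarith [le_abs_self (R - ν * τ)]
end

section
/- Let 0 < ν < 1, β = ν²/(1−ν²), γ = ν/(1−ν²), r_T, ρ_T, ρ_A > 0, R = r_T + ρ_T. Fix τ with R − ν·τ > 0 and angles θ_A0, θ, and set x_C = (R − ν·τ)·û(θ_A0) − β·ρ_A·û(θ). Assume R − γ·ρ_A ≥ 0. Then ‖x_C‖ + γ·ρ_A ≤ R holds if and only if sin²((θ − θ_A0)/2) ≤ [(R − γ·ρ_A)² − (R − ν·τ − β·ρ_A)²] / [4·β·ρ_A·(R − ν·τ)]. -/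
open Real

/-- The Apollonius circle (center `x_C = (R − ντ)û(θ_A0) − βρ_A û(θ)`, radius `γρ_A`)
lies entirely inside the disk of radius `R = r_T + ρ_T`, i.e. `‖x_C‖ + γρ_A ≤ R`,
if and only if
`sin²((θ − θ_A0)/2) ≤ [(R − γρ_A)² − (R − ντ − βρ_A)²] / [4βρ_A(R − ντ)]`. -/
theorem escape_prevention_condition_central
    (ν r_T ρ_T ρ_A τ θ_A0 θ : ℝ) (hν0 : 0 < ν) (hν1 : ν < 1)
    (hrT : 0 < r_T) (hρT : 0 < ρ_T) (hρA : 0 < ρ_A)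
    (R β γ : ℝ) (hR : R = r_T + ρ_T)
    (hβ : β = ν ^ 2 / (1 - ν ^ 2)) (hγ : γ = ν / (1 - ν ^ 2))
    (hτ : 0 < R - ν * τ) (hRγ : 0 ≤ R - γ * ρ_A)
    (x_C : EuclideanSpace ℝ (Fin 2))
    (hxC : x_C = (R - ν * τ) • uhat θ_A0 - (β * ρ_A) • uhat θ) :
    ‖x_C‖ + γ * ρ_A ≤ R ↔
      Real.sin ((θ - θ_A0) / 2) ^ 2 ≤
        ((R - γ * ρ_A) ^ 2 - (R - ν * τ - β * ρ_A) ^ 2) /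
          (4 * β * ρ_A * (R - ν * τ)) := by
  set a := R - ν * τ with ha
  set b := β * ρ_A with hb
  set c := R - γ * ρ_A with hc
  set s := Real.sin ((θ - θ_A0) / 2) with hs
  have hν2 : 0 < 1 - ν ^ 2 := by nlinarith
  have hβpos : 0 < β := by rw [hβ]; positivity
  have hbpos : 0 < b := mul_pos hβpos hρA
  have h4ab : 0 < 4 * β * ρ_A * a := by positivity
  have h0 : x_C 0 = a * Real.cos θ_A0 - b * Real.cos θ := by
    simp [hxC, uhat]
  have h1 : x_C 1 = a * Real.sin θ_A0 - b * Real.sin θ := by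
    simp [hxC, uhat]
  have hnorm : ‖x_C‖ ^ 2 = (a - b) ^ 2 + 4 * a * b * s ^ 2 := by
    have hsq : ‖x_C‖ ^ 2 = (x_C 0) ^ 2 + (x_C 1) ^ 2 := by
      rw [EuclideanSpace.norm_eq, Real.sq_sqrt (by positivity)]
      simp [Fin.sum_univ_two, sq_abs]
    rw [hsq, h0, h1]
    have hcos : Real.cos (θ - θ_A0) =
        Real.cos θ * Real.cos θ_A0 + Real.sin θ * Real.sin θ_A0 := Real.cos_sub θ θ_A0
    have hhalf : s ^ 2 = (1 - Real.cos (θ - θ_A0)) / 2 := by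
      have h2 : 2 * ((θ - θ_A0) / 2) = θ - θ_A0 := by ring
      have hcs := Real.cos_sq ((θ - θ_A0) / 2)
      have hp := Real.sin_sq_add_cos_sq ((θ - θ_A0) / 2)
      rw [h2] at hcs
      rw [hs]; linarith
    have p1 := Real.sin_sq_add_cos_sq θ
    have p2 := Real.sin_sq_add_cos_sq θ_A0
    linear_combination a ^ 2 * p2 + b ^ 2 * p1 + 2 * a * b * hcos - 4 * a * b * hhalf
  have key : ‖x_C‖ + γ * ρ_A ≤ R ↔ ‖x_C‖ ^ 2 ≤ c ^ 2 := by
    constructor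
    · intro h
      have h' : ‖x_C‖ ≤ c := by rw [hc]; linarith
      exact pow_le_pow_left₀ (norm_nonneg _) h' 2
    · intro h
      have h' : ‖x_C‖ ≤ c := (abs_le_of_sq_le_sq' h hRγ).2
      rw [hc] at h'; linarith
  rw [key, hnorm, le_div_iff₀ h4ab]
  rw [hb]
  constructor <;> intro h <;> nlinarith [h]
end

section
/- Let 0 < ν < 1, β = ν²/(1−ν²), γ = ν/(1−ν²), r_T, ρ_T, ρ_A > 0, R = r_T + ρ_T. Suppose τ ≥ 0 satisfies ν·τ ≤ ν·ρ_A/(1 + ν) (i.e., τ ≤ τ₃* := ρ_A/(1+ν)). Then for every angle θ and every entry angle θ_A0, the Apollonius-circle center x_C = (R − ν·τ)·û(θ_A0) − β·ρ_A·û(θ) satisfies ‖x_C‖ + γ·ρ_A ≥ R. -/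
open Real

/-- If engagement begins no later than the critical time `τ₃* = ρ_A/(1+ν)`
(equivalently `ντ ≤ νρ_A/(1+ν)`), then for every engagement angle `θ` and every entry
angle `θ_A0`, the Apollonius-circle center `x_C = (R − ντ)û(θ_A0) − βρ_A û(θ)` satisfies
`‖x_C‖ + γρ_A ≥ R`: the Apollonius circle extends beyond the disk of radius `R`, so
escape cannot be prevented, regardless of the engagement angle. -/
theorem escape_before_critical_time_tau3
    (ν r_T ρ_T ρ_A τ : ℝ) (hν0 : 0 < ν) (hν1 : ν < 1)
    (hrT : 0 < r_T) (hρT : 0 < ρ_T) (hρA : 0 < ρ_A)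
    (R β γ : ℝ) (hR : R = r_T + ρ_T)
    (hβ : β = ν ^ 2 / (1 - ν ^ 2)) (hγ : γ = ν / (1 - ν ^ 2))
    (hτ0 : 0 ≤ τ) (hτ : ν * τ ≤ ν * ρ_A / (1 + ν)) :
    ∀ θ θ_A0 : ℝ,
      ‖((R - ν * τ) • uhat θ_A0 - (β * ρ_A) • uhat θ : EuclideanSpace ℝ (Fin 2))‖ +
        γ * ρ_A ≥ R := by
  intro θ θ_A0
  have h1ν : (0:ℝ) < 1 + ν := by linarith
  have h1ν2 : (0:ℝ) < 1 - ν ^ 2 := by nlinarith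
  have hβ0 : 0 ≤ β := by
    rw [hβ]; positivity
  have key : ‖((R - ν * τ) • uhat θ_A0 - (β * ρ_A) • uhat θ : EuclideanSpace ℝ (Fin 2))‖
      ≥ |R - ν * τ| - β * ρ_A := by
    have := norm_sub_norm_le ((R - ν * τ) • uhat θ_A0 : EuclideanSpace ℝ (Fin 2))
      ((β * ρ_A) • uhat θ)
    rw [norm_smul, norm_smul, norm_uhat, norm_uhat, mul_one, mul_one] at this
    have hb : ‖β * ρ_A‖ = β * ρ_A := by
      rw [Real.norm_eq_abs, abs_of_nonneg (by positivity)]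
    rw [Real.norm_eq_abs, hb] at this
    linarith
  have hγβ : γ - β = ν / (1 + ν) := by
    rw [hγ, hβ]
    field_simp
    ring
  have hcrit : ν * τ ≤ ν / (1 + ν) * ρ_A := by
    rw [div_mul_eq_mul_div]; exact hτ
  have hmul : γ * ρ_A - β * ρ_A = ν / (1 + ν) * ρ_A := by rw [← sub_mul, hγβ]
  rcases le_or_gt (ν * τ) R with h | h
  · have : |R - ν * τ| = R - ν * τ := abs_of_nonneg (by linarith)
    rw [ge_iff_le]
    calc R ≤ R - ν * τ + (ν / (1 + ν)) * ρ_A := by linarith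
      _ = |R - ν * τ| - β * ρ_A + γ * ρ_A := by rw [this]; linarith [hmul]
      _ ≤ _ := by linarith [key]
  · have habs : |R - ν * τ| = ν * τ - R := by
      rw [abs_of_nonpos (by linarith)]; ring
    have h2 : ν * τ ≤ γ * ρ_A - β * ρ_A := by rw [hmul]; linarith [hcrit]
    rw [ge_iff_le]
    calc R ≤ ν * τ - R + (γ * ρ_A - β * ρ_A) := by linarith
      _ = |R - ν * τ| - β * ρ_A + γ * ρ_A := by rw [habs]; ring
      _ ≤ _ := by linarith [key]
end

section
/- Let 0 < ν < 1, β = ν²/(1−ν²), γ = ν/(1−ν²), r_T, ρ_T, ρ_A > 0, R = r_T + ρ_T. Suppose τ satisfies ν·ρ_A/(1 − ν) ≤ ν·τ ≤ R (i.e., τ ≥ τ₄* := ρ_A/(1−ν) and R − ντ ≥ 0). Then for every angle θ and every entry angle θ_A0, the Apollonius-circle center x_C = (R − ν·τ)·û(θ_A0) − β·ρ_A·û(θ) satisfies ‖x_C‖ + γ·ρ_A ≤ R. -/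
open Real

/-- If engagement begins no earlier than the critical time `τ₄* = ρ_A/(1−ν)`
(equivalently `νρ_A/(1−ν) ≤ ντ`) while `ντ ≤ R`, then for every engagement angle `θ`
and every entry angle `θ_A0`, the Apollonius-circle center
`x_C = (R − ντ)û(θ_A0) − βρ_A û(θ)` satisfies `‖x_C‖ + γρ_A ≤ R`: the Apollonius
circle lies entirely in the disk of radius `R`, so the attacker cannot escape. -/
theorem no_escape_after_critical_time_tau4
    (ν r_T ρ_T ρ_A τ : ℝ) (hν0 : 0 < ν) (hν1 : ν < 1)
    (hrT : 0 < r_T) (hρT : 0 < ρ_T) (hρA : 0 < ρ_A)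
    (R β γ : ℝ) (hR : R = r_T + ρ_T)
    (hβ : β = ν ^ 2 / (1 - ν ^ 2)) (hγ : γ = ν / (1 - ν ^ 2))
    (hτ : ν * ρ_A / (1 - ν) ≤ ν * τ) (hτR : ν * τ ≤ R) :
    ∀ θ θ_A0 : ℝ,
      ‖((R - ν * τ) • uhat θ_A0 - (β * ρ_A) • uhat θ : EuclideanSpace ℝ (Fin 2))‖ +
        γ * ρ_A ≤ R := by
  intro θ θ_A0
  have h1 : ‖((R - ν * τ) • uhat θ_A0 - (β * ρ_A) • uhat θ : EuclideanSpace ℝ (Fin 2))‖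
      ≤ |R - ν * τ| + |β * ρ_A| := by
    calc _ ≤ ‖(R - ν * τ) • uhat θ_A0‖ + ‖(β * ρ_A) • uhat θ‖ := norm_sub_le _ _
    _ = |R - ν * τ| + |β * ρ_A| := by
        rw [norm_smul, norm_smul, norm_uhat, norm_uhat, Real.norm_eq_abs, Real.norm_eq_abs]
        ring
  have hν2 : (0:ℝ) < 1 - ν ^ 2 := by nlinarith
  have hβpos : 0 ≤ β := by rw [hβ]; positivity
  have habs1 : |R - ν * τ| = R - ν * τ := abs_of_nonneg (by linarith)
  have habs2 : |β * ρ_A| = β * ρ_A := abs_of_nonneg (by positivity)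
  rw [habs1, habs2] at h1
  -- β + γ = ν/(1-ν)
  have hkey : (β + γ) * ρ_A ≤ ν * τ := by
    have hne1 : (1:ℝ) - ν ≠ 0 := by linarith
    have hne2 : (1:ℝ) - ν ^ 2 ≠ 0 := ne_of_gt hν2
    have : (β + γ) * ρ_A = ν * ρ_A / (1 - ν) := by
      rw [hβ, hγ]
      field_simp
      ring
    linarith [this ▸ hτ]
  linarith
end
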